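/- Let 1 < α < 2 and n ≥ 1. Then ∑_{k=0}^{n} g_k^α > −1/n^α. -/

import Mathlib

/-- Grünwald–Letnikov coefficient `g_k^α = (-1)^k * binom(α,k)`. -/
noncomputable def gl (a : ℝ) (k : ℕ) : ℝ :=
  (-1 : ℝ) ^ k * (∏ j ∈ Finset.range k, (a - j)) / (Nat.factorial k : ℝ)

/-- Shifted Grünwald weights. -/
noncomputable def glw (a : ℝ) : ℕ → ℝ
  | 0 => a / 2 * gl a 0
  | (k+1) => a / 2 * gl a (k+1) + (2 - a) / 2 * gl a k

/-- Second-order Lubich coefficients `l_m^{2,γ}`. -/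
noncomputable def lub2 (g : ℝ) (m : ℕ) : ℝ :=
  (3/2 : ℝ) ^ g * ∑ k ∈ Finset.range (m+1), (1/3 : ℝ) ^ k * gl g k * gl g (m - k)

/-- The Toeplitz matrix `B_α` of size `(M-1) × (M-1)`. -/
noncomputable def Bmat (a : ℝ) (M : ℕ) : Matrix (Fin (M-1)) (Fin (M-1)) ℝ :=
  fun i j => if (j : ℕ) ≤ (i : ℕ) + 1 then glw a ((i : ℕ) + 1 - (j : ℕ)) else 0

/-- The symmetric matrix `A_α = B_α + B_αᵀ`. -/
noncomputable def Amat (a : ℝ) (M : ℕ) : Matrix (Fin (M-1)) (Fin (M-1)) ℝ :=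
  Bmat a M + (Bmat a M).transpose

lemma gl_zero (a : ℝ) : gl a 0 = 1 := by simp [gl]

lemma gl_succ (a : ℝ) (k : ℕ) : gl a (k+1) = ((k : ℝ) - a) / (k+1) * gl a k := by
  have h : ((k : ℝ) + 1) ≠ 0 := by positivity
  have hf : (Nat.factorial k : ℝ) ≠ 0 := Nat.cast_ne_zero.mpr (Nat.factorial_ne_zero k)
  simp only [gl, Finset.prod_range_succ, Nat.factorial_succ, pow_succ]
  push_cast
  field_simp
  ring

lemma prod_shift (α : ℝ) (k : ℕ) :
    ∏ j ∈ Finset.range (k+1), (α - (j : ℝ)) = α * ∏ j ∈ Finset.range k, (α - 1 - (j : ℝ)) := by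
  rw [Finset.prod_range_succ']
  simp only [Nat.cast_add, Nat.cast_one, Nat.cast_zero, sub_zero]
  rw [mul_comm]
  congr 1
  apply Finset.prod_congr rfl
  intro j _
  ring

lemma gl_pascal (α : ℝ) (n : ℕ) :
    gl α (n+1) = gl (α - 1) (n+1) - gl (α - 1) n := by
  have hf : (Nat.factorial n : ℝ) ≠ 0 := Nat.cast_ne_zero.mpr (Nat.factorial_ne_zero n)
  have h : ((n : ℝ) + 1) ≠ 0 := by positivity
  have h1 := prod_shift α n
  have h2 : ∏ j ∈ Finset.range (n+1), (α - 1 - (j : ℝ))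
      = (∏ j ∈ Finset.range n, (α - 1 - (j : ℝ))) * (α - 1 - n) :=
    Finset.prod_range_succ _ _
  simp only [gl, h1, h2, Nat.factorial_succ, pow_succ]
  push_cast
  field_simp
  ring

lemma sum_gl (α : ℝ) (n : ℕ) :
    ∑ k ∈ Finset.range (n+1), gl α k = gl (α - 1) n := by
  induction n with
  | zero => simp [gl]
  | succ n ih =>
      rw [Finset.sum_range_succ, ih, gl_pascal]
      ring

theorem stmt3 (α : ℝ) (hα1 : 1 < α) (hα2 : α < 2) (n : ℕ) (hn : 1 ≤ n) :
    -(1 / (n : ℝ) ^ α) < ∑ k ∈ Finset.range (n+1), gl α k := by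
  rw [sum_gl]
  -- prove by induction: for n ≥ 1, -(1/n^α) < gl (α-1) n ∧ gl (α-1) n < 0
  have key : ∀ m : ℕ, 1 ≤ m → -(1 / (m : ℝ) ^ α) < gl (α - 1) m ∧ gl (α - 1) m < 0 := by
    intro m hm
    induction m with
    | zero => omega
    | succ m ih =>
      rcases Nat.eq_or_lt_of_le hm with h1 | h1
      · -- m + 1 = 1
        have hm0 : m = 0 := by omega
        subst hm0
        constructor
        · rw [gl_succ, gl_zero]
          norm_num [Real.one_rpow]
          linarith
        · rw [gl_succ, gl_zero]
          norm_num
          linarith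
      · have hm1 : 1 ≤ m := by omega
        obtain ⟨ih1, ih2⟩ := ih hm1
        have hmpos : (0 : ℝ) < m := by exact_mod_cast hm1
        have hm1pos : (0 : ℝ) < (m : ℝ) + 1 := by linarith
        have hc : (0 : ℝ) < ((m : ℝ) - (α - 1)) / ((m : ℝ) + 1) := by
          apply div_pos
          · have : (1 : ℝ) ≤ m := by exact_mod_cast hm1
            linarith
          · exact hm1pos
        have hgl : gl (α - 1) (m + 1) = ((m : ℝ) - (α - 1)) / ((m : ℝ) + 1) * gl (α - 1) m :=
          gl_succ _ _
        constructor
        · rw [hgl]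
          push_cast
          have step : ((m : ℝ) - (α - 1)) / ((m : ℝ) + 1) * (-(1 / (m : ℝ) ^ α))
              ≥ -(1 / ((m : ℝ) + 1) ^ α) := by
            -- i.e. c / m^α ≤ 1/(m+1)^α, i.e. c * (m+1)^α ≤ m^α... use Bernoulli
            rw [mul_neg, ge_iff_le, neg_le_neg_iff, mul_one_div,
              div_le_div_iff₀ (by positivity) (by positivity)]
            have hb : 1 + α * (-(1 / ((m : ℝ) + 1))) ≤ (1 + (-(1 / ((m : ℝ) + 1)))) ^ α := by
              apply one_add_mul_self_le_rpow_one_add _ hα1.le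
              have : (1 : ℝ) / ((m : ℝ) + 1) ≤ 1 := by
                rw [div_le_one hm1pos]; linarith
              linarith
            have he : (1 : ℝ) + (-(1 / ((m : ℝ) + 1))) = (m : ℝ) / ((m : ℝ) + 1) := by
              field_simp
              ring
            rw [he, Real.div_rpow hmpos.le hm1pos.le] at hb
            have h2 : ((m : ℝ) - (α - 1)) / ((m : ℝ) + 1) = 1 + α * (-(1 / ((m : ℝ) + 1))) := by
              field_simp; ring
            calc ((m : ℝ) - (α - 1)) / ((m : ℝ) + 1) * ((m : ℝ) + 1) ^ α
                = (1 + α * (-(1 / ((m : ℝ) + 1)))) * ((m : ℝ) + 1) ^ α := by rw [h2]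
              _ ≤ ((m : ℝ) ^ α / ((m : ℝ) + 1) ^ α) * ((m : ℝ) + 1) ^ α := by
                  apply mul_le_mul_of_nonneg_right hb (by positivity)
              _ = (m : ℝ) ^ α := by
                  field_simp
              _ = 1 * (m : ℝ) ^ α := by ring
          calc -(1 / ((m : ℝ) + 1) ^ α)
              ≤ ((m : ℝ) - (α - 1)) / ((m : ℝ) + 1) * (-(1 / (m : ℝ) ^ α)) := step
            _ < ((m : ℝ) - (α - 1)) / ((m : ℝ) + 1) * gl (α - 1) m := by
                exact mul_lt_mul_of_pos_left ih1 hc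
        · rw [hgl]
          exact mul_neg_of_pos_of_neg hc ih2
  exact (key n hn).1
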